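/- If a monotone continuous function f : ℝ → ℝ is Lipschitz at all but countably many points (i.e., the set of points s where there is no constant C with |f(s+ε)-f(s)| ≤ C|ε| + o(ε) is countable), then f is locally absolutely continuous. -/

import Mathlib

open Metric Set Function

/-- `f` is Lipschitz at the point `s`: there is a constant `C` with
`|f(s+ε)-f(s)| ≤ C|ε| + o(ε)` for small `ε`. -/
def LipschitzPtAt (f : ℝ → ℝ) (s : ℝ) : Prop :=
  ∃ C : ℝ, ∀ η : ℝ, 0 < η → ∃ δ : ℝ, 0 < δ ∧ ∀ ε : ℝ, |ε| < δ →
    |f (s + ε) - f s| ≤ C * |ε| + η * |ε|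

/-- `f` is absolutely continuous on the interval `[a, b]`. -/
def AbsContOn (f : ℝ → ℝ) (a b : ℝ) : Prop :=
  ∀ η : ℝ, 0 < η → ∃ δ : ℝ, 0 < δ ∧ ∀ n : ℕ, ∀ x y : Fin n → ℝ,
    (∀ i, a ≤ x i ∧ x i < y i ∧ y i ≤ b) →
    (∀ i j : Fin n, i < j → y i ≤ x j) →
    (∑ i, (y i - x i)) < δ → (∑ i, |f (y i) - f (x i)|) < η

/-- `f` is locally absolutely continuous: every point has a neighborhood on which
`f` is absolutely continuous. -/
def LocAbsCont (f : ℝ → ℝ) : Prop :=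
  ∀ s : ℝ, ∃ a b : ℝ, a < s ∧ s < b ∧ AbsContOn f a b

open MeasureTheory in
open scoped NNReal ENNReal in
theorem monotone_lipschitzPtAt_cocountable_locAbsCont
    (f : ℝ → ℝ) (hmono : Monotone f) (hcont : Continuous f)
    (hcnt : {s : ℝ | ¬ LipschitzPtAt f s}.Countable) :
    LocAbsCont f := by
  classical
  -- Build the Stieltjes function associated with `f`.
  set F : StieltjesFunction ℝ :=
    ⟨f, hmono, fun x => (hcont.continuousAt).continuousWithinAt⟩ with hF
  have hFf : ∀ x, F x = f x := fun x => rfl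
  set ρ : MeasureTheory.Measure ℝ := F.measure with hρdef
  -- `f` is continuous, so `leftLim f = f` and `ρ` has no atoms.
  have hleft : ∀ x : ℝ, Function.leftLim f x = f x := by
    intro x
    exact leftLim_eq_of_tendsto
      ((hcont.tendsto x).mono_left nhdsWithin_le_nhds)
  haveI : MeasureTheory.NullSingletonClass ρ := by
    constructor
    intro x
    rw [hρdef, F.measure_singleton]
    simp [hFf, show (⇑F) = f from rfl, hleft x]
  have hIcc : ∀ x r : ℝ, ρ (Icc (x - r) (x + r)) = ENNReal.ofReal (f (x + r) - f (x - r)) := by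
    intro x r
    rw [hρdef, F.measure_Icc]
    simp [hFf, show (⇑F) = f from rfl, hleft]
  -- The sets with density bound `n`.
  set v := Besicovitch.vitaliFamily ρ with hv
  set T : ℕ → Set ℝ := fun n =>
    {x | ∃ᶠ a in v.filterAt x, ρ a ≤ ((n : ℝ≥0) • (MeasureTheory.volume : MeasureTheory.Measure ℝ)) a}
    with hT
  -- Every Lipschitz point lies in some `T n`.
  have claim1 : ∀ x : ℝ, LipschitzPtAt f x → ∃ n : ℕ, x ∈ T n := by
    intro x hx
    obtain ⟨C, hC⟩ := hx
    obtain ⟨δ, hδpos, hδ⟩ := hC 1 one_pos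
    refine ⟨⌈C⌉₊ + 1, ?_⟩
    have hfreq : ∃ᶠ r in nhdsWithin (0:ℝ) (Set.Ioi 0),
        ρ (Metric.closedBall x r) ≤
          (((⌈C⌉₊ + 1 : ℕ) : ℝ≥0) • (MeasureTheory.volume : MeasureTheory.Measure ℝ))
            (Metric.closedBall x r) := by
      apply Filter.Eventually.frequently
      filter_upwards [Ioo_mem_nhdsGT hδpos]
      intro r hr
      obtain ⟨hr0, hrδ⟩ := hr
      have habs : |r| < δ := by rwa [abs_of_pos hr0]
      have h1 : |f (x + r) - f x| ≤ C * |r| + 1 * |r| := hδ r habs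
      have h2 : |f (x + (-r)) - f x| ≤ C * |(-r)| + 1 * |(-r)| := by
        apply hδ; rwa [abs_neg]
      have hb1 : f (x + r) - f x ≤ (C + 1) * r := by
        have := le_trans (le_abs_self _) h1
        rw [abs_of_pos hr0] at this; linarith
      have hb2 : f x - f (x - r) ≤ (C + 1) * r := by
        have h2' := le_trans (neg_le_abs _) h2
        rw [abs_neg, abs_of_pos hr0] at h2'
        have : x + (-r) = x - r := by ring
        rw [this] at h2'; linarith
      have key : f (x + r) - f (x - r) ≤ ((⌈C⌉₊ + 1 : ℕ) : ℝ) * (2 * r) := by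
        have hceil : C ≤ (⌈C⌉₊ : ℝ) := Nat.le_ceil C
        have : ((⌈C⌉₊ + 1 : ℕ) : ℝ) ≥ C + 1 := by push_cast; linarith
        nlinarith
      have hmeas : (((⌈C⌉₊ + 1 : ℕ) : ℝ≥0) • (MeasureTheory.volume : MeasureTheory.Measure ℝ))
          (Metric.closedBall x r) = ENNReal.ofReal (((⌈C⌉₊ + 1 : ℕ) : ℝ) * (2 * r)) := by
        have hcast : ((((⌈C⌉₊ + 1 : ℕ) : ℝ≥0)) : ℝ≥0∞) = ENNReal.ofReal ((⌈C⌉₊ + 1 : ℕ) : ℝ) := by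
          rw [ENNReal.ofReal_natCast]; norm_cast
        rw [MeasureTheory.Measure.smul_apply, Real.volume_closedBall, ENNReal.smul_def,
          smul_eq_mul, hcast, ← ENNReal.ofReal_mul (by positivity)]
      rw [hmeas, Real.closedBall_eq_Icc, hIcc x r]
      exact ENNReal.ofReal_le_ofReal key
    exact (Besicovitch.tendsto_filterAt ρ x).frequently hfreq
  -- `ρ` vanishes on Lebesgue-null subsets of each `T n`.
  have claim2 : ∀ (n : ℕ) (A : Set ℝ), MeasureTheory.volume A = 0 → ρ (A ∩ T n) = 0 := by
    intro n A hA
    have h1 : ρ (A ∩ T n) ≤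
        ((n : ℝ≥0) • (MeasureTheory.volume : MeasureTheory.Measure ℝ)) (A ∩ T n) := by
      apply v.measure_le_of_frequently_le
        ((n : ℝ≥0) • (MeasureTheory.volume : MeasureTheory.Measure ℝ))
        (MeasureTheory.Measure.AbsolutelyContinuous.refl ρ)
      intro x hx
      exact hx.2
    have h2 : ((n : ℝ≥0) • (MeasureTheory.volume : MeasureTheory.Measure ℝ)) (A ∩ T n) = 0 := by
      rw [MeasureTheory.Measure.smul_apply]
      have : MeasureTheory.volume (A ∩ T n) = 0 :=
        MeasureTheory.measure_mono_null Set.inter_subset_left hA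
      rw [this, smul_zero]
    exact le_antisymm (h1.trans h2.le) zero_le
  -- `ρ ≪ volume`.
  have hac : ρ ≪ (MeasureTheory.volume : MeasureTheory.Measure ℝ) := by
    apply MeasureTheory.Measure.AbsolutelyContinuous.mk
    intro A _ hA
    have hbad : ρ {s : ℝ | ¬ LipschitzPtAt f s} = 0 := hcnt.measure_zero ρ
    have hsub : A ⊆ (A ∩ {s : ℝ | ¬ LipschitzPtAt f s}) ∪ ⋃ n : ℕ, (A ∩ T n) := by
      intro x hx
      by_cases hlip : LipschitzPtAt f x
      · obtain ⟨n, hn⟩ := claim1 x hlip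
        exact Or.inr (Set.mem_iUnion.mpr ⟨n, hx, hn⟩)
      · exact Or.inl ⟨hx, hlip⟩
    refine le_antisymm ?_ zero_le
    calc ρ A ≤ ρ ((A ∩ {s : ℝ | ¬ LipschitzPtAt f s}) ∪ ⋃ n : ℕ, (A ∩ T n)) :=
          MeasureTheory.measure_mono hsub
      _ ≤ ρ (A ∩ {s : ℝ | ¬ LipschitzPtAt f s}) + ρ (⋃ n : ℕ, (A ∩ T n)) :=
          MeasureTheory.measure_union_le _ _
      _ ≤ 0 + ∑' n : ℕ, ρ (A ∩ T n) := by
          gcongr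
          · exact le_trans (MeasureTheory.measure_mono Set.inter_subset_right) hbad.le
          · exact MeasureTheory.measure_iUnion_le _
      _ = 0 := by
          rw [zero_add]
          simp only [fun n => claim2 n A hA, tsum_zero]
  -- Now prove local absolute continuity on `[s-1, s+1]`.
  intro s
  refine ⟨s - 1, s + 1, by linarith, by linarith, ?_⟩
  intro η hη
  set I : Set ℝ := Icc (s - 1) (s + 1) with hI
  set g : ℝ → ℝ≥0∞ := ρ.rnDeriv MeasureTheory.volume with hg
  have hwd : (MeasureTheory.volume : MeasureTheory.Measure ℝ).withDensity g = ρ :=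
    MeasureTheory.Measure.withDensity_rnDeriv_eq ρ MeasureTheory.volume hac
  have hIfin : ρ I ≠ ⊤ := (isCompact_Icc.measure_lt_top).ne
  have hfin : ∫⁻ x, g x ∂((MeasureTheory.volume : MeasureTheory.Measure ℝ).restrict I) ≠ ⊤ := by
    have : ∫⁻ x, g x ∂((MeasureTheory.volume : MeasureTheory.Measure ℝ).restrict I) = ρ I := by
      rw [← hwd, MeasureTheory.withDensity_apply g measurableSet_Icc]
    rw [this]; exact hIfin
  obtain ⟨δ, hδpos, hδ⟩ :=
    MeasureTheory.exists_pos_setLIntegral_lt_of_measure_lt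
      (μ := (MeasureTheory.volume : MeasureTheory.Measure ℝ).restrict I) hfin
      (ε := ENNReal.ofReal η) (ENNReal.ofReal_pos.mpr hη).ne'
  set d : ℝ := (min δ 1).toReal with hd
  have hmin_ne_top : min δ 1 ≠ ⊤ := ne_top_of_le_ne_top ENNReal.one_ne_top (min_le_right _ _)
  have hdpos : 0 < d := ENNReal.toReal_pos (lt_min hδpos one_pos).ne' hmin_ne_top
  have hofd : ENNReal.ofReal d = min δ 1 := ENNReal.ofReal_toReal hmin_ne_top
  refine ⟨d, hdpos, ?_⟩
  intro n x y hxy hord hsum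
  set A : Set ℝ := ⋃ i, Ioc (x i) (y i) with hA
  have hAmeas : MeasurableSet A := MeasurableSet.iUnion (fun i => measurableSet_Ioc)
  have hAI : A ⊆ I := by
    intro t ht
    obtain ⟨i, hi⟩ := Set.mem_iUnion.mp ht
    obtain ⟨h1, h2, h3⟩ := hxy i
    exact ⟨le_trans h1 (le_of_lt hi.1), le_trans hi.2 h3⟩
  have hdisj : Pairwise (Function.onFun Disjoint (fun i => Ioc (x i) (y i))) := by
    intro i j hij
    rcases lt_or_gt_of_ne hij with h | h
    · exact Set.Ioc_disjoint_Ioc.mpr (le_trans (min_le_left _ _)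
        (le_trans (hord i j h) (le_max_right _ _)))
    · exact Set.Ioc_disjoint_Ioc.mpr (le_trans (min_le_right _ _)
        (le_trans (hord j i h) (le_max_left _ _)))
  -- Lebesgue measure of `A` is small.
  have hvolA : MeasureTheory.volume A < ENNReal.ofReal d := by
    calc MeasureTheory.volume A ≤ ∑' i, MeasureTheory.volume (Ioc (x i) (y i)) :=
          MeasureTheory.measure_iUnion_le _
      _ = ∑ i, ENNReal.ofReal (y i - x i) := by
          rw [tsum_fintype]; congr 1; ext i; exact Real.volume_Ioc
      _ = ENNReal.ofReal (∑ i, (y i - x i)) := by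
          rw [ENNReal.ofReal_sum_of_nonneg]
          intro i _
          exact sub_nonneg.mpr (le_of_lt (hxy i).2.1)
      _ < ENNReal.ofReal d := (ENNReal.ofReal_lt_ofReal_iff hdpos).mpr hsum
  have hrestrA : ((MeasureTheory.volume : MeasureTheory.Measure ℝ).restrict I) A < δ := by
    calc ((MeasureTheory.volume : MeasureTheory.Measure ℝ).restrict I) A
        ≤ MeasureTheory.volume A := MeasureTheory.Measure.restrict_le_self A
      _ < ENNReal.ofReal d := hvolA
      _ ≤ δ := hofd.le.trans (min_le_left _ _)
  have hρA : ρ A < ENNReal.ofReal η := by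
    have h1 := hδ A hrestrA
    have h2 : ∫⁻ t in A, g t ∂((MeasureTheory.volume : MeasureTheory.Measure ℝ).restrict I)
        = ρ A := by
      rw [MeasureTheory.Measure.restrict_restrict hAmeas,
        Set.inter_eq_self_of_subset_left hAI, ← hwd,
        MeasureTheory.withDensity_apply g hAmeas]
    rwa [h2] at h1
  -- Compute `ρ A` as the sum of increments.
  have hρA_eq : ρ A = ENNReal.ofReal (∑ i, (f (y i) - f (x i))) := by
    rw [hA, MeasureTheory.measure_iUnion hdisj (fun i => measurableSet_Ioc)]
    rw [tsum_fintype]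
    rw [ENNReal.ofReal_sum_of_nonneg (fun i _ => sub_nonneg.mpr (hmono (le_of_lt (hxy i).2.1)))]
    congr 1; ext i
    rw [hρdef, F.measure_Ioc]
  have hsum_lt : (∑ i, (f (y i) - f (x i))) < η := by
    rw [hρA_eq] at hρA
    exact (ENNReal.ofReal_lt_ofReal_iff hη).mp hρA
  calc (∑ i, |f (y i) - f (x i)|) = ∑ i, (f (y i) - f (x i)) := by
        apply Finset.sum_congr rfl
        intro i _
        exact abs_of_nonneg (sub_nonneg.mpr (hmono (le_of_lt (hxy i).2.1)))
    _ < η := hsum_lt
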